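/- Let 0 < γ < 1, let φ : [0,∞) → ℝ be continuous and exponentially bounded (|φ(t)| ≤ M e^{σt} for all t ≥ T, some M, σ > 0), and define u(t) = u₀ + (1/Γ(γ)) ∫₀^t (t−τ)^{γ−1} φ(τ) dτ. Then u is exponentially bounded: there exists A > 0 such that |u(t)| ≤ A e^{σt} for all t ≥ T. -/

import Mathlib

open Real MeasureTheory

/-- The solution of a Caputo fractional IVP with exponentially bounded
right-hand side is itself exponentially bounded. -/
theorem frac_solution_exponentially_bounded (γ : ℝ) (hγ₀ : 0 < γ) (hγ₁ : γ < 1)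
    (φ : ℝ → ℝ) (u₀ M σ T : ℝ) (hφ : Continuous φ)
    (hM : 0 < M) (hσ : 0 < σ) (hT : 0 ≤ T)
    (hbound : ∀ t ≥ T, |φ t| ≤ M * Real.exp (σ * t)) :
    ∃ A > 0, ∀ t ≥ T,
      |u₀ + (1 / Real.Gamma γ) * ∫ τ in (0:ℝ)..t, (t - τ) ^ (γ - 1) * φ τ| ≤
        A * Real.exp (σ * t) := by
  have hΓ : 0 < Real.Gamma γ := Real.Gamma_pos_of_pos hγ₀
  -- bound of φ on [0, T]
  obtain ⟨K, hK⟩ : ∃ K, ∀ x ∈ Set.Icc (0:ℝ) T, |φ x| ≤ K := by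
    obtain ⟨K, hK⟩ := (isCompact_Icc (a := (0:ℝ)) (b := T)).exists_bound_of_continuousOn
      hφ.continuousOn
    exact ⟨K, fun x hx => hK x hx⟩
  set C : ℝ := max M K + 1 with hC
  have hC0 : 0 < C := by
    have : M ≤ max M K := le_max_left _ _
    simp only [hC]; linarith
  have hCM : M ≤ C := by have := le_max_left M K; simp only [hC]; linarith
  have hCK : K ≤ C := by have := le_max_right M K; linarith
  -- uniform exponential bound of φ on [0, ∞)
  have hφbound : ∀ τ : ℝ, 0 ≤ τ → |φ τ| ≤ C * Real.exp (σ * τ) := by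
    intro τ hτ
    have hexp1 : (1:ℝ) ≤ Real.exp (σ * τ) := by
      rw [show (1:ℝ) = Real.exp 0 by simp]
      exact Real.exp_le_exp.mpr (by positivity)
    rcases le_total τ T with h | h
    · calc |φ τ| ≤ K := hK τ ⟨hτ, h⟩
        _ ≤ C := hCK
        _ = C * 1 := by ring
        _ ≤ C * Real.exp (σ * τ) := by nlinarith
    · calc |φ τ| ≤ M * Real.exp (σ * τ) := hbound τ h
        _ ≤ C * Real.exp (σ * τ) := by nlinarith [Real.exp_pos (σ * τ)]
  -- the Gamma-type integral on Ioi 0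
  have hIoiInt : IntegrableOn (fun s : ℝ => s ^ (γ - 1) * Real.exp (-(σ * s))) (Set.Ioi 0) := by
    have := integrableOn_rpow_mul_exp_neg_mul_rpow (p := 1) (s := γ - 1) (b := σ)
      (by linarith) zero_lt_one hσ
    refine this.congr_fun (fun x hx => ?_) measurableSet_Ioi
    simp only [Real.rpow_one]; ring_nf
  have hIoiVal : ∫ s in Set.Ioi (0:ℝ), s ^ (γ - 1) * Real.exp (-(σ * s))
      = (1 / σ) ^ γ * Real.Gamma γ := Real.integral_rpow_mul_exp_neg_mul_Ioi hγ₀ hσ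
  refine ⟨|u₀| + (1 / Real.Gamma γ) * (C * ((1 / σ) ^ γ * Real.Gamma γ)) + 1, ?_, ?_⟩
  · have h1 : 0 < (1 / σ) ^ γ := Real.rpow_pos_of_pos (by positivity) _
    positivity
  intro t ht
  have ht0 : 0 ≤ t := le_trans hT ht
  have hexp1 : (1:ℝ) ≤ Real.exp (σ * t) := by
    rw [show (1:ℝ) = Real.exp 0 by simp]
    exact Real.exp_le_exp.mpr (by positivity)
  -- integrability of the singular kernel
  have hker : IntervalIntegrable (fun τ => (t - τ) ^ (γ - 1)) volume 0 t := by
    have h1 : IntervalIntegrable (fun x : ℝ => x ^ (γ - 1)) volume 0 t :=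
      intervalIntegral.intervalIntegrable_rpow' (by linarith)
    have h2 := h1.comp_sub_left t
    simpa using h2.symm
  have hgInt : IntervalIntegrable (fun τ => (t - τ) ^ (γ - 1) * φ τ) volume 0 t :=
    hker.mul_continuousOn hφ.continuousOn
  have hbInt : IntervalIntegrable (fun τ => (t - τ) ^ (γ - 1) * (C * Real.exp (σ * τ)))
      volume 0 t :=
    hker.mul_continuousOn (by fun_prop)
  -- step 1: bound the interval integral by the integral of the bound
  have step1 : |∫ τ in (0:ℝ)..t, (t - τ) ^ (γ - 1) * φ τ|
      ≤ ∫ τ in (0:ℝ)..t, (t - τ) ^ (γ - 1) * (C * Real.exp (σ * τ)) := by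
    calc |∫ τ in (0:ℝ)..t, (t - τ) ^ (γ - 1) * φ τ|
        ≤ ∫ τ in (0:ℝ)..t, |(t - τ) ^ (γ - 1) * φ τ| :=
          intervalIntegral.abs_integral_le_integral_abs ht0
      _ ≤ ∫ τ in (0:ℝ)..t, (t - τ) ^ (γ - 1) * (C * Real.exp (σ * τ)) := by
          apply intervalIntegral.integral_mono_on ht0 hgInt.abs hbInt
          intro x hx
          rw [abs_mul]
          have hx0 : 0 ≤ t - x := by linarith [hx.2]
          have h1 : |(t - x) ^ (γ - 1)| = (t - x) ^ (γ - 1) :=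
            abs_of_nonneg (Real.rpow_nonneg hx0 _)
          rw [h1]
          exact mul_le_mul_of_nonneg_left (hφbound x hx.1) (Real.rpow_nonneg hx0 _)
  -- step 2: change of variables and comparison with the Gamma integral
  have step2 : ∫ τ in (0:ℝ)..t, (t - τ) ^ (γ - 1) * (C * Real.exp (σ * τ))
      = C * Real.exp (σ * t) * ∫ s in (0:ℝ)..t, s ^ (γ - 1) * Real.exp (-(σ * s)) := by
    have heq : ∀ τ : ℝ, (t - τ) ^ (γ - 1) * (C * Real.exp (σ * τ))
        = C * Real.exp (σ * t) * ((t - τ) ^ (γ - 1) * Real.exp (-(σ * (t - τ)))) := by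
      intro τ
      rw [show Real.exp (σ * τ) = Real.exp (σ * t) * Real.exp (-(σ * (t - τ))) by
        rw [← Real.exp_add]; ring_nf]
      ring
    rw [intervalIntegral.integral_congr (g := fun τ =>
      C * Real.exp (σ * t) * ((t - τ) ^ (γ - 1) * Real.exp (-(σ * (t - τ)))))
      (fun τ _ => heq τ), intervalIntegral.integral_const_mul]
    congr 1
    have := intervalIntegral.integral_comp_sub_left
      (fun s => s ^ (γ - 1) * Real.exp (-(σ * s))) t (a := 0) (b := t)
    simpa using this
  have step3 : ∫ s in (0:ℝ)..t, s ^ (γ - 1) * Real.exp (-(σ * s))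
      ≤ (1 / σ) ^ γ * Real.Gamma γ := by
    rw [← hIoiVal, intervalIntegral.integral_of_le ht0]
    apply setIntegral_mono_set hIoiInt
    · filter_upwards [self_mem_ae_restrict measurableSet_Ioi] with x hx
      exact mul_nonneg (Real.rpow_nonneg (le_of_lt hx) _) (Real.exp_pos _).le
    · exact (Set.Ioc_subset_Ioi_self).eventuallyLE
  -- combine
  have hI : |∫ τ in (0:ℝ)..t, (t - τ) ^ (γ - 1) * φ τ|
      ≤ C * Real.exp (σ * t) * ((1 / σ) ^ γ * Real.Gamma γ) := by
    refine step1.trans ?_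
    rw [step2]
    have hpos : 0 ≤ C * Real.exp (σ * t) := by positivity
    exact mul_le_mul_of_nonneg_left step3 hpos
  have habs : |u₀ + (1 / Real.Gamma γ) * ∫ τ in (0:ℝ)..t, (t - τ) ^ (γ - 1) * φ τ|
      ≤ |u₀| + (1 / Real.Gamma γ) * |∫ τ in (0:ℝ)..t, (t - τ) ^ (γ - 1) * φ τ| := by
    rw [show (1 / Real.Gamma γ) * |∫ τ in (0:ℝ)..t, (t - τ) ^ (γ - 1) * φ τ|
        = |(1 / Real.Gamma γ) * ∫ τ in (0:ℝ)..t, (t - τ) ^ (γ - 1) * φ τ| by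
      rw [abs_mul, abs_of_pos (by positivity : (0:ℝ) < 1 / Real.Gamma γ)]]
    exact abs_add_le _ _
  have hΓinv : 0 < 1 / Real.Gamma γ := by positivity
  have hrp : 0 < (1 / σ) ^ γ * Real.Gamma γ := by
    have : 0 < (1/σ:ℝ) ^ γ := Real.rpow_pos_of_pos (by positivity) _
    positivity
  calc |u₀ + (1 / Real.Gamma γ) * ∫ τ in (0:ℝ)..t, (t - τ) ^ (γ - 1) * φ τ|
      ≤ |u₀| + (1 / Real.Gamma γ) * |∫ τ in (0:ℝ)..t, (t - τ) ^ (γ - 1) * φ τ| := habs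
    _ ≤ |u₀| + (1 / Real.Gamma γ) * (C * Real.exp (σ * t) * ((1 / σ) ^ γ * Real.Gamma γ)) :=
        by nlinarith
    _ ≤ (|u₀| + (1 / Real.Gamma γ) * (C * ((1 / σ) ^ γ * Real.Gamma γ)) + 1) *
        Real.exp (σ * t) := by nlinarith [abs_nonneg u₀, Real.exp_pos (σ * t)]
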